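/- Let G be a graph with an injective embedding ω: V_G → ℝ³ such that for every edge uv ∈ E_G, the vector ω(u) − ω(v) is parallel to one of the four vectors (1,0,0), (0,1,0), (0,0,1), (−1,−1,−1), and all four directions are present among the edges. Then G is movable. -/

import Mathlib

open SimpleGraph Real

/-- The Euclidean plane. -/
abbrev Plane : Type := EuclideanSpace ℝ (Fin 2)

variable {V : Type*}

/-- A placement of a graph in the plane: endpoints of edges do not coincide. -/
def IsPlacement (G : SimpleGraph V) (p : V → Plane) : Prop :=
  ∀ ⦃u v : V⦄, G.Adj u v → p u ≠ p v

/-- Two placements are equivalent as frameworks on `G` if corresponding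
edge lengths agree. -/
def FrameworkEquiv (G : SimpleGraph V) (p q : V → Plane) : Prop :=
  ∀ ⦃u v : V⦄, G.Adj u v → dist (p u) (p v) = dist (q u) (q v)

/-- Two placements are congruent if all pairwise distances agree. -/
def PCongruent (p q : V → Plane) : Prop :=
  ∀ u v : V, dist (p u) (p v) = dist (q u) (q v)

/-- A flex of the framework `(G, p)`: a continuous path of placements on `[0,1]`
starting at `p`, each equivalent to `(G, p)`. -/
def IsFlex (G : SimpleGraph V) (p : V → Plane) (f : ℝ → V → Plane) : Prop :=
  ContinuousOn f (Set.Icc 0 1) ∧ f 0 = p ∧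
    ∀ t ∈ Set.Icc (0 : ℝ) 1, IsPlacement G (f t) ∧ FrameworkEquiv G p (f t)

/-- A flex is trivial if every placement along it is congruent to the initial one. -/
def IsTrivialFlex (p : V → Plane) (f : ℝ → V → Plane) : Prop :=
  ∀ t ∈ Set.Icc (0 : ℝ) 1, PCongruent (f t) p

/-- The placement `p` induces the labeling `lam`. -/
def Induces (G : SimpleGraph V) (p : V → Plane) (lam : Sym2 V → ℝ) : Prop :=
  ∀ ⦃u v : V⦄, G.Adj u v → dist (p u) (p v) = lam s(u, v)

/-- A labeling (positive on the edges) is flexible if some framework inducing it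
has a non-trivial flex. -/
def IsFlexibleLabeling (G : SimpleGraph V) (lam : Sym2 V → ℝ) : Prop :=
  (∀ e ∈ G.edgeSet, 0 < lam e) ∧
    ∃ p : V → Plane, Induces G p lam ∧ ∃ f, IsFlex G p f ∧ ¬ IsTrivialFlex p f

/-- A labeling is a proper flexible labeling if some framework inducing it has a
non-trivial flex in which all but finitely many placements are injective. -/
def IsProperFlexibleLabeling (G : SimpleGraph V) (lam : Sym2 V → ℝ) : Prop :=
  (∀ e ∈ G.edgeSet, 0 < lam e) ∧
    ∃ p : V → Plane, Induces G p lam ∧ ∃ f, IsFlex G p f ∧ ¬ IsTrivialFlex p f ∧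
      {t ∈ Set.Icc (0 : ℝ) 1 | ¬ Function.Injective (f t)}.Finite

/-- A graph is movable if it has a proper flexible labeling. -/
def Movable (G : SimpleGraph V) : Prop :=
  ∃ lam : Sym2 V → ℝ, IsProperFlexibleLabeling G lam

/-- A NAC-coloring: a surjective 2-coloring (`true` = red, `false` = blue) of the
edges such that every cycle is either monochromatic or contains at least two
edges of each color. -/
def IsNACColoring (G : SimpleGraph V) (δ : Sym2 V → Bool) : Prop :=
  (∃ e ∈ G.edgeSet, δ e = true) ∧ (∃ e ∈ G.edgeSet, δ e = false) ∧
    ∀ ⦃v : V⦄ (c : G.Walk v v), c.IsCycle →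
      (∀ e ∈ c.edges, δ e = true) ∨ (∀ e ∈ c.edges, δ e = false) ∨
        (2 ≤ (c.edges.filter (fun e => δ e)).length ∧
          2 ≤ (c.edges.filter (fun e => !(δ e))).length)

/-- The four admissible edge directions in `ℝ³`. -/
def spatialDirs : Set (Fin 3 → ℝ) :=
  {![1, 0, 0], ![0, 1, 0], ![0, 0, 1], ![-1, -1, -1]}


open Real
open scoped RealInnerProductSpace



noncomputable section

def mk2 (x y : ℝ) : Plane := WithLp.toLp 2 ![x, y]

def kk (t : ℝ) : ℝ := Real.sqrt (1 / (5/4 - Real.cos (π * t)) - 1/4)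

lemma dd2_lb (t : ℝ) : (1/4 : ℝ) ≤ 5/4 - Real.cos (π * t) := by
  have := Real.cos_le_one (π * t); linarith

lemma dd2_ub (t : ℝ) : (5/4 : ℝ) - Real.cos (π * t) ≤ 9/4 := by
  have := Real.neg_one_le_cos (π * t); linarith

lemma dd2_pos (t : ℝ) : (0:ℝ) < 5/4 - Real.cos (π * t) := lt_of_lt_of_le (by norm_num) (dd2_lb t)

lemma kk_arg_pos (t : ℝ) : (0:ℝ) < 1 / (5/4 - Real.cos (π * t)) - 1/4 := by
  have h1 := dd2_ub t
  have h2 := dd2_pos t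
  have : (4:ℝ)/9 ≤ 1 / (5/4 - Real.cos (π * t)) := by
    rw [le_div_iff₀ h2]; linarith
  linarith

lemma kk_pos (t : ℝ) : 0 < kk t := Real.sqrt_pos.mpr (kk_arg_pos t)

lemma kk_sq (t : ℝ) : kk t ^ 2 = 1 / (5/4 - Real.cos (π * t)) - 1/4 :=
  Real.sq_sqrt (kk_arg_pos t).le

lemma kk_sq' (t : ℝ) : kk t ^ 2 * (5/4 - Real.cos (π * t)) = 1 - (5/4 - Real.cos (π * t))/4 := by
  have h2 := (dd2_pos t).ne'
  rw [kk_sq, sub_mul, one_div_mul_cancel h2]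
  ring

def AA (t : ℝ) : Plane := mk2 (Real.cos (π*t)) (Real.sin (π*t))
def BB (t : ℝ) : Plane :=
  mk2 ((1/2 - Real.cos (π*t))/2 + kk t * Real.sin (π*t))
      (-(Real.sin (π*t))/2 + kk t * (1/2 - Real.cos (π*t)))
def CC (t : ℝ) : Plane :=
  mk2 ((1/2 - Real.cos (π*t))/2 - kk t * Real.sin (π*t))
      (-(Real.sin (π*t))/2 - kk t * (1/2 - Real.cos (π*t)))

lemma cont_mk2 {g h : ℝ → ℝ} (hg : Continuous g) (hh : Continuous h) :
    Continuous (fun t => mk2 (g t) (h t)) := by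
  unfold mk2
  apply (PiLp.continuous_toLp 2 (fun _ : Fin 2 => ℝ)).comp
  refine continuous_pi fun i => ?_
  refine Fin.cases ?_ (fun j => ?_) i
  · simpa using hg
  · refine Fin.cases ?_ (fun j => j.elim0) j
    simpa using hh

lemma cont_kk : Continuous kk := by
  unfold kk
  apply Real.continuous_sqrt.comp
  apply Continuous.sub _ continuous_const
  exact continuous_const.div (by fun_prop) (fun t => (dd2_pos t).ne')

lemma contAA : Continuous AA := cont_mk2 (by fun_prop) (by fun_prop)

lemma contBB : Continuous BB := by
  have := cont_kk
  exact cont_mk2 (by fun_prop) (by fun_prop)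

lemma contCC : Continuous CC := by
  have := cont_kk
  exact cont_mk2 (by fun_prop) (by fun_prop)

lemma inner_mk2 (a b c d : ℝ) : ⟪mk2 a b, mk2 c d⟫ = a*c + b*d := by
  simp [mk2, PiLp.inner_apply, Fin.sum_univ_two]; ring

lemma norm_of_sq {x : Plane} {r : ℝ} (hr : 0 ≤ r) (h : ⟪x,x⟫ = r^2) : ‖x‖ = r := by
  have h2 : ‖x‖^2 = r^2 := by rw [← real_inner_self_eq_norm_sq, h]
  calc ‖x‖ = Real.sqrt (‖x‖^2) := (Real.sqrt_sq (norm_nonneg x)).symm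
    _ = r := by rw [h2, Real.sqrt_sq hr]

lemma normAA (t : ℝ) : ‖AA t‖ = 1 := by
  apply norm_of_sq zero_le_one
  rw [AA, inner_mk2]
  have := Real.sin_sq_add_cos_sq (π*t)
  nlinarith

lemma normBB (t : ℝ) : ‖BB t‖ = 1 := by
  apply norm_of_sq zero_le_one
  rw [BB, inner_mk2]
  have hpy := Real.sin_sq_add_cos_sq (π*t)
  have hk := kk_sq' t
  nlinarith [hk, hpy]

lemma normCC (t : ℝ) : ‖CC t‖ = 1 := by
  apply norm_of_sq zero_le_one
  rw [CC, inner_mk2]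
  have hpy := Real.sin_sq_add_cos_sq (π*t)
  have hk := kk_sq' t
  nlinarith [hk, hpy]

lemma sumABC (t : ℝ) : AA t + BB t + CC t = mk2 (1/2) 0 := by
  unfold AA BB CC mk2
  ext i; fin_cases i <;> simp <;> ring

lemma norm_mk_half : ‖mk2 (1/2) 0‖ = 1/2 := by
  apply norm_of_sq (by norm_num)
  rw [inner_mk2]; norm_num

lemma innerAB (t : ℝ) : ⟪AA t, BB t⟫ = Real.cos (π*t)/4 - 1/2 + kk t * Real.sin (π*t)/2 := by
  rw [AA, BB, inner_mk2]
  have hpy := Real.sin_sq_add_cos_sq (π*t)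
  nlinarith [hpy]

end
section
open Real
open scoped RealInnerProductSpace

lemma comps (δ0 δ1 δ2 t : ℝ) (h : δ0 • AA t + δ1 • BB t + δ2 • CC t = 0) :
    (δ0 * Real.cos (π*t) + δ1 * ((1/2 - Real.cos (π*t))/2 + kk t * Real.sin (π*t))
      + δ2 * ((1/2 - Real.cos (π*t))/2 - kk t * Real.sin (π*t)) = 0) ∧
    (δ0 * Real.sin (π*t) + δ1 * (-(Real.sin (π*t))/2 + kk t * (1/2 - Real.cos (π*t)))
      + δ2 * (-(Real.sin (π*t))/2 - kk t * (1/2 - Real.cos (π*t))) = 0) := by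
  constructor
  · have h0 := congrArg (fun x : Plane => x 0) h
    simpa [AA, BB, CC, mk2, PiLp.add_apply, PiLp.smul_apply, smul_eq_mul] using h0
  · have h1 := congrArg (fun x : Plane => x 1) h
    simpa [AA, BB, CC, mk2, PiLp.add_apply, PiLp.smul_apply, smul_eq_mul] using h1

lemma eqI (δ0 δ1 δ2 t : ℝ) (h : δ0 • AA t + δ1 • BB t + δ2 • CC t = 0) :
    δ0 * (Real.cos (π*t)/2 - 1) + (δ1+δ2) * (5/4 - Real.cos (π*t))/2 = 0 := by
  obtain ⟨h0, h1⟩ := comps δ0 δ1 δ2 t h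
  have hpy := Real.sin_sq_add_cos_sq (π*t)
  linear_combination (1/2 - Real.cos (π*t)) * h0 - Real.sin (π*t) * h1 + (δ0 - (δ1+δ2)/2) * hpy

lemma eqII (δ0 δ1 δ2 t : ℝ) (h : δ0 • AA t + δ1 • BB t + δ2 • CC t = 0) :
    δ0 * Real.sin (π*t)/2 + (δ1-δ2) * (kk t * (5/4 - Real.cos (π*t))) = 0 := by
  obtain ⟨h0, h1⟩ := comps δ0 δ1 δ2 t h
  have hpy := Real.sin_sq_add_cos_sq (π*t)
  linear_combination Real.sin (π*t) * h0 + (1/2 - Real.cos (π*t)) * h1 - (δ1 - δ2) * kk t * hpy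

lemma delta_zero (δ0 δ1 δ2 t : ℝ) (hm : δ0 = δ1 + δ2)
    (h : δ0 • AA t + δ1 • BB t + δ2 • CC t = 0) : δ0 = 0 ∧ δ1 = 0 ∧ δ2 = 0 := by
  have h1 := eqI δ0 δ1 δ2 t h
  have h2 := eqII δ0 δ1 δ2 t h
  have hd0 : δ0 = 0 := by nlinarith [dd2_pos t]
  have hm0 : δ1 + δ2 = 0 := by rw [← hm, hd0]
  have hk := mul_pos (kk_pos t) (dd2_pos t)
  have hb : (δ1 - δ2) * (kk t * (5/4 - Real.cos (π*t))) = 0 := by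
    rw [hd0] at h2; linarith
  rcases mul_eq_zero.mp hb with hx | hx
  · exact ⟨hd0, by linarith, by linarith⟩
  · exact absurd hx hk.ne'

lemma cos_eq (δ0 δ1 δ2 t t' : ℝ) (hm : δ0 ≠ δ1 + δ2)
    (h : δ0 • AA t + δ1 • BB t + δ2 • CC t = 0)
    (h' : δ0 • AA t' + δ1 • BB t' + δ2 • CC t' = 0) :
    Real.cos (π*t) = Real.cos (π*t') := by
  have h1 := eqI δ0 δ1 δ2 t h
  have h1' := eqI δ0 δ1 δ2 t' h'
  have key : (Real.cos (π*t) - Real.cos (π*t')) * (δ0 - (δ1+δ2)) / 2 = 0 := by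
    linear_combination h1 - h1'
  have := sub_ne_zero.mpr hm
  have := mul_eq_zero.mp (by linarith : (Real.cos (π*t) - Real.cos (π*t')) * (δ0 - (δ1+δ2)) = 0)
  rcases this with h | h
  · linarith [sub_eq_zero.mp h]
  · exact absurd h (sub_ne_zero.mpr hm)

lemma time_eq (δ0 δ1 δ2 : ℝ) (hne : ¬(δ0 = 0 ∧ δ1 = 0 ∧ δ2 = 0)) {t t' : ℝ}
    (ht : t ∈ Set.Icc (0:ℝ) 1) (ht' : t' ∈ Set.Icc (0:ℝ) 1)
    (h : δ0 • AA t + δ1 • BB t + δ2 • CC t = 0)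
    (h' : δ0 • AA t' + δ1 • BB t' + δ2 • CC t' = 0) : t = t' := by
  by_cases hm : δ0 = δ1 + δ2
  · exact absurd (delta_zero δ0 δ1 δ2 t hm h) hne
  · have hc := cos_eq δ0 δ1 δ2 t t' hm h h'
    have hmem : π * t ∈ Set.Icc 0 π := by
      constructor
      · exact mul_nonneg Real.pi_pos.le ht.1
      · nlinarith [Real.pi_pos, ht.2]
    have hmem' : π * t' ∈ Set.Icc 0 π := by
      constructor
      · exact mul_nonneg Real.pi_pos.le ht'.1
      · nlinarith [Real.pi_pos, ht'.2]
    have := Real.injOn_cos hmem hmem' hc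
    exact mul_left_cancel₀ Real.pi_ne_zero this

end
section
open Real SimpleGraph
open scoped RealInnerProductSpace

lemma polar (x y x' y' : Plane) :
    ⟪x - y, x' - y'⟫ = ((dist x y')^2 + (dist y x')^2 - (dist x x')^2 - (dist y y')^2)/2 := by
  have e : ∀ a b : Plane, ‖a - b‖^2 = ⟪a,a⟫ - 2*⟪a,b⟫ + ⟪b,b⟫ := by
    intro a b
    rw [← real_inner_self_eq_norm_sq, inner_sub_left, inner_sub_right, inner_sub_right,
      real_inner_comm b a]
    ring
  simp only [dist_eq_norm, e, inner_sub_left, inner_sub_right]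
  ring

variable {V : Type*}

noncomputable def ff (ω : V → Fin 3 → ℝ) (t : ℝ) (v : V) : Plane :=
  ω v 0 • AA t + ω v 1 • BB t + ω v 2 • CC t

lemma ff_sub (ω : V → Fin 3 → ℝ) (t : ℝ) (u v : V) :
    ff ω t u - ff ω t v =
      (ω u 0 - ω v 0) • AA t + (ω u 1 - ω v 1) • BB t + (ω u 2 - ω v 2) • CC t := by
  unfold ff; module

theorem movable_of_spatial_embedding' [Fintype V] (G : SimpleGraph V)
    (ω : V → Fin 3 → ℝ) (hinj : Function.Injective ω)
    (hpar : ∀ u v : V, G.Adj u v → ∃ d ∈ spatialDirs, ∃ c : ℝ, ω u - ω v = c • d)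
    (hall : ∀ d ∈ spatialDirs, ∃ u v : V, G.Adj u v ∧ ∃ c : ℝ, ω u - ω v = c • d) :
    Movable G := by
  classical
  have hcne : ∀ {u v : V} {c : ℝ} {d : Fin 3 → ℝ}, G.Adj u v → ω u - ω v = c • d → c ≠ 0 := by
    intro u v c d hadj hc h0
    apply hadj.ne
    apply hinj
    apply sub_eq_zero.mp
    rw [hc, h0, zero_smul]
  -- key: each edge has constant positive length along the motion
  have key : ∀ {u v : V}, G.Adj u v → ∃ r : ℝ, 0 < r ∧ ∀ t, dist (ff ω t u) (ff ω t v) = r := by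
    intro u v hadj
    obtain ⟨d, hd, c, hc⟩ := hpar u v hadj
    have hc0 : c ≠ 0 := hcne hadj hc
    have hcomp : ∀ i, ω u i - ω v i = c * d i := by
      intro i; have := congrFun hc i; simpa using this
    simp only [spatialDirs, Set.mem_insert_iff, Set.mem_singleton_iff] at hd
    have h0 := hcomp 0
    have h1 := hcomp 1
    have h2 := hcomp 2
    rcases hd with h | h | h | h <;> subst h <;> simp only [Matrix.cons_val_zero,
      Matrix.cons_val_one, Matrix.head_cons, Matrix.cons_val_two, Matrix.tail_cons,
      mul_one, mul_zero, mul_neg] at h0 h1 h2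
    · refine ⟨|c|, abs_pos.mpr hc0, fun t => ?_⟩
      rw [dist_eq_norm, ff_sub, h0, h1, h2]
      simp [norm_smul, normAA t]
    · refine ⟨|c|, abs_pos.mpr hc0, fun t => ?_⟩
      rw [dist_eq_norm, ff_sub, h0, h1, h2]
      simp [norm_smul, normBB t]
    · refine ⟨|c|, abs_pos.mpr hc0, fun t => ?_⟩
      rw [dist_eq_norm, ff_sub, h0, h1, h2]
      simp [norm_smul, normCC t]
    · refine ⟨|c|/2, by positivity, fun t => ?_⟩
      rw [dist_eq_norm, ff_sub, h0, h1, h2, ← smul_add, ← smul_add, sumABC]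
      rw [norm_smul, norm_mk_half]
      simp [abs_neg]
      ring
  refine ⟨Sym2.lift ⟨fun u v => dist (ff ω 0 u) (ff ω 0 v), fun u v => dist_comm _ _⟩,
    ?_, ff ω 0, ?_, ff ω, ⟨?_, rfl, ?_⟩, ?_, ?_⟩
  · -- positivity on edges
    intro e
    induction e using Sym2.ind with
    | _ u v =>
      intro he
      have hadj := G.mem_edgeSet.mp he
      obtain ⟨r, hr, hrt⟩ := key hadj
      rw [Sym2.lift_mk]
      show 0 < dist (ff ω 0 u) (ff ω 0 v)
      rw [hrt 0]
      exact hr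
  · -- Induces
    intro u v _
    rw [Sym2.lift_mk]
  · -- continuity
    apply Continuous.continuousOn
    apply continuous_pi
    intro v
    show Continuous fun t => ω v 0 • AA t + ω v 1 • BB t + ω v 2 • CC t
    exact (((continuous_const (y := ω v 0)).smul contAA).add ((continuous_const (y := ω v 1)).smul contBB)).add
      ((continuous_const (y := ω v 2)).smul contCC)
  · -- placement + equivalence
    intro t _
    constructor
    · intro u v hadj
      obtain ⟨r, hr, hrt⟩ := key hadj
      exact dist_pos.mp (by rw [hrt t]; exact hr)
    · intro u v hadj
      obtain ⟨r, hr, hrt⟩ := key hadj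
      rw [hrt 0, hrt t]
  · -- non-trivial
    intro htr
    obtain ⟨u, v, hadj, c, hc⟩ := hall ![1,0,0] (by simp [spatialDirs])
    obtain ⟨u', v', hadj', c', hc'⟩ := hall ![0,1,0] (by simp [spatialDirs])
    have hc0 : c ≠ 0 := hcne hadj hc
    have hc0' : c' ≠ 0 := hcne hadj' hc'
    have hcomp : ∀ i, ω u i - ω v i = c * (![1,0,0] : Fin 3 → ℝ) i := by
      intro i; have := congrFun hc i; simpa using this
    have hcomp' : ∀ i, ω u' i - ω v' i = c' * (![0,1,0] : Fin 3 → ℝ) i := by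
      intro i; have := congrFun hc' i; simpa using this
    have hdiff : ∀ t, ff ω t u - ff ω t v = c • AA t := by
      intro t
      have h0 := hcomp 0; have h1 := hcomp 1; have h2 := hcomp 2
      simp only [Matrix.cons_val_zero, Matrix.cons_val_one, Matrix.head_cons,
        Matrix.cons_val_two, Matrix.tail_cons, mul_one, mul_zero] at h0 h1 h2
      rw [ff_sub, h0, h1, h2]
      simp
    have hdiff' : ∀ t, ff ω t u' - ff ω t v' = c' • BB t := by
      intro t
      have h0 := hcomp' 0; have h1 := hcomp' 1; have h2 := hcomp' 2
      simp only [Matrix.cons_val_zero, Matrix.cons_val_one, Matrix.head_cons,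
        Matrix.cons_val_two, Matrix.tail_cons, mul_one, mul_zero] at h0 h1 h2
      rw [ff_sub, h0, h1, h2]
      simp
    have hip : ∀ t, ⟪ff ω t u - ff ω t v, ff ω t u' - ff ω t v'⟫ = c * c' * ⟪AA t, BB t⟫ := by
      intro t
      rw [hdiff t, hdiff' t, real_inner_smul_left, real_inner_smul_right]
      ring
    have h1 : PCongruent (ff ω 1) (ff ω 0) := htr 1 ⟨zero_le_one, le_refl 1⟩
    have e1 : ⟪ff ω 1 u - ff ω 1 v, ff ω 1 u' - ff ω 1 v'⟫
        = ⟪ff ω 0 u - ff ω 0 v, ff ω 0 u' - ff ω 0 v'⟫ := by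
      rw [polar, polar, h1 u v', h1 v u', h1 u u', h1 v v']
    rw [hip 1, hip 0] at e1
    have i0 : ⟪AA 0, BB 0⟫ = -(1/4) := by
      rw [innerAB]; simp; norm_num
    have i1 : ⟪AA 1, BB 1⟫ = -(3/4) := by
      rw [innerAB]; simp; norm_num
    rw [i0, i1] at e1
    have : c * c' = 0 := by linarith
    exact mul_ne_zero hc0 hc0' this
  · -- finiteness of non-injective times
    have hsub : {t ∈ Set.Icc (0:ℝ) 1 | ¬ Function.Injective (ff ω t)} ⊆
        ⋃ (q : V × V), {t ∈ Set.Icc (0:ℝ) 1 | q.1 ≠ q.2 ∧ ff ω t q.1 = ff ω t q.2} := by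
      rintro t ⟨ht, hni⟩
      rw [Function.not_injective_iff] at hni
      obtain ⟨a, b, hab, hne⟩ := hni
      exact Set.mem_iUnion.mpr ⟨(a,b), ht, hne, hab⟩
    apply Set.Finite.subset _ hsub
    apply Set.finite_iUnion
    intro q
    apply Set.Subsingleton.finite
    rintro t ⟨ht, hq, hE⟩ t' ⟨ht', -, hE'⟩
    have hδ : ¬(ω q.1 0 - ω q.2 0 = 0 ∧ ω q.1 1 - ω q.2 1 = 0 ∧ ω q.1 2 - ω q.2 2 = 0) := by
      rintro ⟨z0, z1, z2⟩
      apply hq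
      apply hinj
      funext i
      match i with
      | 0 => linarith
      | 1 => linarith
      | 2 => linarith
    have h : (ω q.1 0 - ω q.2 0) • AA t + (ω q.1 1 - ω q.2 1) • BB t
        + (ω q.1 2 - ω q.2 2) • CC t = 0 := by
      rw [← ff_sub]; exact sub_eq_zero.mpr hE
    have h' : (ω q.1 0 - ω q.2 0) • AA t' + (ω q.1 1 - ω q.2 1) • BB t'
        + (ω q.1 2 - ω q.2 2) • CC t' = 0 := by
      rw [← ff_sub]; exact sub_eq_zero.mpr hE'
    exact time_eq _ _ _ hδ ht ht' h h'
end

/-- A graph with an injective spatial embedding whose edges are parallel to the four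
directions `(1,0,0)`, `(0,1,0)`, `(0,0,1)`, `(-1,-1,-1)`, all four occurring,
is movable. -/
theorem movable_of_spatial_embedding [Fintype V] (G : SimpleGraph V)
    (ω : V → Fin 3 → ℝ) (hinj : Function.Injective ω)
    (hpar : ∀ u v : V, G.Adj u v → ∃ d ∈ spatialDirs, ∃ c : ℝ, ω u - ω v = c • d)
    (hall : ∀ d ∈ spatialDirs, ∃ u v : V, G.Adj u v ∧ ∃ c : ℝ, ω u - ω v = c • d) :
    Movable G := by
  exact movable_of_spatial_embedding' G ω hinj hpar hall
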